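/- Let (X, d) be a compact metric space, let (M_i)_{i∈ω} be a sequence of finite sets, and let R ⊆ X be a co-meager set. Suppose compact sets C_{p₀p₁…p_i} ⊆ X are given for every i ∈ ω and every finite sequence p₀p₁…p_i ∈ ∏_{j≤i} M_j, satisfying: (1) for every infinite sequence p ∈ ∏_{j∈ω} M_j, the intersection ⋂_{i∈ω} C_{p₀p₁…p_i} is a singleton; (2) C_{p₀…p_n p_{n+1}} ⊆ C_{p₀…p_n} for all n and all sequences; (3) every C_{p₀…p_i} has nonempty interior; (4) for every finite sequence, C_{p₀…p_i} = ⋃_{j ∈ M_{i+1}} closure(interior(C_{p₀…p_i j})). Then there exist a strictly increasing sequence of integers 0 = n₀ < n₁ < n₂ < … and an infinite sequence r = (r_j)_{j∈ω} ∈ ∏_{j∈ω} M_j such that for every sequence s = (s_j)_{j∈ω} ∈ ∏_{j∈ω} M_j, if the set {i ∈ ω : s restricted to [n_i, n_{i+1}) equals r restricted to [n_i, n_{i+1})} is infinite, then ⋂_{j∈ω} C_{s₀s₁…s_j} ⊆ R. -/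
import Mathlib


/-- The combinatorial lemma about co-meager sets in compact metric
spaces: given a system of compact sets indexed by finite sequences satisfying the four
structural conditions, one can find a block decomposition `(n_i)` and a reference sequence
`r` such that any branch agreeing with `r` on infinitely many blocks lands inside the
co-meager set `R`. -/
theorem stmt_13 {X : Type*} [MetricSpace X] [CompactSpace X]
    (M : ℕ → Type*) [∀ i, Finite (M i)] [∀ i, Nonempty (M i)]
    (R : Set X) (hR : IsMeagre Rᶜ)
    (C : ℕ → (∀ j, M j) → Set X)
    (hdep : ∀ (i : ℕ) (p q : ∀ j, M j), (∀ j ≤ i, p j = q j) → C i p = C i q)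
    (hcompact : ∀ (i : ℕ) (p : ∀ j, M j), IsCompact (C i p))
    (hsingleton : ∀ p : ∀ j, M j, ∃ x : X, ⋂ i, C i p = {x})
    (hdecr : ∀ (i : ℕ) (p : ∀ j, M j), C (i + 1) p ⊆ C i p)
    (hint : ∀ (i : ℕ) (p : ∀ j, M j), (interior (C i p)).Nonempty)
    (hcover : ∀ (i : ℕ) (p : ∀ j, M j),
      C i p = ⋃ m : M (i + 1), closure (interior (C (i + 1) (Function.update p (i + 1) m)))) :
    ∃ n : ℕ → ℕ, n 0 = 0 ∧ StrictMono n ∧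
      ∃ r : ∀ j, M j, ∀ s : ∀ j, M j,
        {i : ℕ | ∀ j, n i ≤ j → j < n (i + 1) → s j = r j}.Infinite →
        (⋂ i, C i s) ⊆ R := by
  classical
  -- C is antitone in the level
  have Cmono : ∀ (p : ∀ j, M j) {i i' : ℕ}, i ≤ i' → C i' p ⊆ C i p := by
    intro p i i' h
    induction i', h using Nat.le_induction with
    | base => exact subset_rfl
    | succ k hk ih => exact (hdecr k p).trans ih
  -- decompose Rᶜ into an increasing sequence of closed nowhere dense sets G
  obtain ⟨S, hSnwd, hScount, hSsub⟩ := isMeagre_iff_countable_union_isNowhereDense.mp hR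
  obtain ⟨e, he⟩ := (hScount.insert ∅).exists_eq_range (Set.insert_nonempty _ _)
  set Fc : ℕ → Set X := fun k => closure (e k) with hFc
  have hFcc : ∀ k, IsClosed (Fc k) := fun k => isClosed_closure
  have hFci : ∀ k, interior (Fc k) = ∅ := by
    intro k
    have hm : e k ∈ insert (∅ : Set X) S := by rw [he]; exact Set.mem_range_self k
    rcases Set.mem_insert_iff.mp hm with h | h
    · simp [Fc, h]
    · exact hSnwd _ h
  have hunion : ∀ s t : Set X, IsClosed s → IsClosed t → interior s = ∅ →
      interior t = ∅ → interior (s ∪ t) = ∅ := by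
    intro s t hs ht his hit
    rw [interior_eq_empty_iff_dense_compl] at his hit ⊢
    rw [Set.compl_union]
    exact Dense.inter_of_isOpen_left his hit hs.isOpen_compl
  set G : ℕ → Set X := fun k => Nat.rec (Fc 0) (fun k Gk => Gk ∪ Fc (k + 1)) k with hG
  have hGsucc : ∀ k, G (k + 1) = G k ∪ Fc (k + 1) := fun k => rfl
  have hGc : ∀ k, IsClosed (G k) := by
    intro k
    induction k with
    | zero => exact hFcc 0
    | succ k ih => rw [hGsucc]; exact ih.union (hFcc (k + 1))
  have hGi : ∀ k, interior (G k) = ∅ := by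
    intro k
    induction k with
    | zero => exact hFci 0
    | succ k ih => rw [hGsucc]; exact hunion _ _ (hGc k) (hFcc (k + 1)) ih (hFci (k + 1))
  have hFG : ∀ k, Fc k ⊆ G k := by
    intro k
    cases k with
    | zero => exact subset_rfl
    | succ k => rw [hGsucc]; exact Set.subset_union_right
  have hGmono : ∀ {k k'}, k ≤ k' → G k ⊆ G k' := by
    intro k k' h
    induction k', h using Nat.le_induction with
    | base => exact subset_rfl
    | succ m hm ih => rw [hGsucc]; exact ih.trans Set.subset_union_left
  have hRG : Rᶜ ⊆ ⋃ k, G k := by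
    intro x hx
    obtain ⟨t, htS, hxt⟩ := hSsub hx
    have : t ∈ insert (∅ : Set X) S := Set.mem_insert_of_mem _ htS
    rw [he] at this
    obtain ⟨k, hk⟩ := this
    refine Set.mem_iUnion.mpr ⟨k, hFG k ?_⟩
    show x ∈ closure (e k)
    rw [hk]
    exact subset_closure hxt
  -- shrinking lemma in a metric space
  have shrink : ∀ V : Set X, IsOpen V → V.Nonempty →
      ∃ U : Set X, IsOpen U ∧ U.Nonempty ∧ closure U ⊆ V := by
    rintro V hV ⟨x, hx⟩
    obtain ⟨ε, hε, hball⟩ := Metric.isOpen_iff.mp hV x hx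
    refine ⟨Metric.ball x (ε / 2), Metric.isOpen_ball,
      ⟨x, Metric.mem_ball_self (by linarith)⟩, ?_⟩
    exact Metric.closure_ball_subset_closedBall.trans
      ((Metric.closedBall_subset_ball (by linarith)).trans hball)
  -- extension lemma
  have ext : ∀ (F : Set X), IsClosed F → interior F = ∅ →
      ∀ (n : ℕ) (p : ∀ j, M j), ∃ m, n < m ∧ ∃ q : ∀ j, M j,
        (∀ j ≤ n, q j = p j) ∧ C m q ∩ F = ∅ := by
    intro F hFclosed hFint n p
    set T : ℕ → Type _ := fun k => {t : (∀ j, M j) × Set X //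
      IsOpen t.2 ∧ t.2.Nonempty ∧ t.2 ⊆ interior (C (n + k) t.1) ∧ t.2 ∩ F = ∅} with hT
    have hstep : ∀ (k : ℕ) (t : T k), ∃ t' : T (k + 1),
        closure t'.1.2 ⊆ t.1.2 ∧ ∀ j ≤ n + k, t'.1.1 j = t.1.1 j := by
      rintro k ⟨⟨q, U⟩, hUo, hUne, hUsub, hUF⟩
      obtain ⟨x, hx⟩ := hUne
      have hxC : x ∈ C (n + k) q := interior_subset (hUsub hx)
      rw [hcover (n + k) q] at hxC
      obtain ⟨μ, hμ⟩ := Set.mem_iUnion.mp hxC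
      set q' := Function.update q (n + k + 1) μ with hq'
      have hmeet : (U ∩ interior (C (n + k + 1) q')).Nonempty :=
        mem_closure_iff.mp hμ U hUo hx
      obtain ⟨U', hU'o, hU'ne, hU'cl⟩ :=
        shrink _ (hUo.inter isOpen_interior) hmeet
      have hU'sub : U' ⊆ U ∩ interior (C (n + k + 1) q') := subset_closure.trans hU'cl
      refine ⟨⟨⟨q', U'⟩, hU'o, hU'ne, fun y hy => (hU'sub hy).2, ?_⟩,
        hU'cl.trans Set.inter_subset_left, ?_⟩
      · apply Set.eq_empty_of_subset_empty
        rw [← hUF]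
        exact Set.inter_subset_inter_left F (fun y hy => (hU'sub hy).1)
      · intro j hj
        exact Function.update_of_ne (by omega) _ _
    choose next hnext1 hnext2 using hstep
    have hU0ne : (interior (C (n + 0) p) \ F).Nonempty := by
      by_contra h
      rw [Set.not_nonempty_iff_eq_empty, Set.diff_eq_empty] at h
      have h2 : interior (C (n + 0) p) ⊆ interior F := interior_maximal h isOpen_interior
      rw [hFint] at h2
      obtain ⟨z, hz⟩ := hint (n + 0) p
      exact h2 hz
    set t0 : T 0 := ⟨⟨p, interior (C (n + 0) p) \ F⟩, isOpen_interior.sdiff hFclosed,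
      hU0ne, Set.diff_subset, Set.diff_inter_self⟩ with ht0
    set f : ∀ k, T k := fun k => Nat.rec t0 next k with hf
    have hrel : ∀ k, closure (f (k + 1)).1.2 ⊆ (f k).1.2 ∧
        ∀ j ≤ n + k, (f (k + 1)).1.1 j = (f k).1.1 j :=
      fun k => ⟨hnext1 k (f k), hnext2 k (f k)⟩
    have hagree : ∀ k k', k ≤ k' → ∀ j ≤ n + k, (f k').1.1 j = (f k).1.1 j := by
      intro k k' h
      induction k', h using Nat.le_induction with
      | base => intro j _; rfl
      | succ m hm ih =>
        intro j hj
        rw [(hrel m).2 j (hj.trans (by omega)), ih j hj]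
    set q : ∀ j, M j := fun j => (f j).1.1 j with hqdef
    have hqC : ∀ k, C (n + k) q = C (n + k) (f k).1.1 := by
      intro k
      apply hdep
      intro j hj
      rcases le_total j k with h | h
      · exact (hagree j k h j (by omega)).symm
      · exact hagree k j h j hj
    -- the intersection point
    have hanti : Antitone (fun k => closure (f k).1.2) :=
      antitone_nat_of_succ_le (fun k => ((hrel k).1).trans subset_closure)
    have hx : (⋂ k, closure (f k).1.2).Nonempty :=
      IsCompact.nonempty_iInter_of_directed_nonempty_isCompact_isClosed _
        hanti.directed_ge (fun k => ((f k).2.2.1).mono subset_closure)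
        (fun k => isClosed_closure.isCompact) (fun k => isClosed_closure)
    obtain ⟨x, hx⟩ := hx
    have hxU : ∀ k, x ∈ (f k).1.2 := fun k => (hrel k).1 (Set.mem_iInter.mp hx (k + 1))
    have hxF : x ∉ F := by
      intro hxF
      have : x ∈ (f 0).1.2 ∩ F := ⟨hxU 0, hxF⟩
      rw [(f 0).2.2.2.2] at this
      exact this
    have hxCk : ∀ k, x ∈ C (n + k) q := by
      intro k
      rw [hqC k]
      exact interior_subset ((f k).2.2.2.1 (hxU k))
    have hxC : ∀ i, x ∈ C i q := by
      intro i
      rcases le_or_gt n i with h | h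
      · have := hxCk (i - n)
        rwa [show n + (i - n) = i by omega] at this
      · exact Cmono q h.le (by simpa using hxCk 0)
    obtain ⟨y, hy⟩ := hsingleton q
    have hxy : x = y := by
      have : x ∈ ⋂ i, C i q := Set.mem_iInter.mpr hxC
      rw [hy] at this
      exact this
    -- pass to a finite level by compactness
    have hIinter : ⋂ i, (C i q ∩ F) = ∅ := by
      apply Set.eq_empty_iff_forall_notMem.mpr
      intro z hz
      have hz1 : z ∈ ⋂ i, C i q := Set.mem_iInter.mpr (fun i => (Set.mem_iInter.mp hz i).1)
      have hz2 : z ∈ F := (Set.mem_iInter.mp hz 0).2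
      rw [hy, Set.mem_singleton_iff] at hz1
      rw [hz1, ← hxy] at hz2
      exact hxF hz2
    have hfin : ∃ i, C i q ∩ F = ∅ := by
      by_contra h
      push_neg at h
      have hne := IsCompact.nonempty_iInter_of_directed_nonempty_isCompact_isClosed
        (fun i => C i q ∩ F)
        ((antitone_nat_of_succ_le (fun i =>
          Set.inter_subset_inter_left F (hdecr i q))).directed_ge)
        h (fun i => (hcompact i q).inter_right hFclosed)
        (fun i => ((hcompact i q).isClosed).inter hFclosed)
      rw [hIinter] at hne
      exact hne.ne_empty rfl
    obtain ⟨i, hi⟩ := hfin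
    refine ⟨max (n + 1) i, by omega, q, ?_, ?_⟩
    · intro j hj
      exact hagree 0 j (Nat.zero_le j) j (by omega)
    · apply Set.eq_empty_of_subset_empty
      rw [← hi]
      exact Set.inter_subset_inter_left F (Cmono q (le_max_right _ _))
  -- block lemma: a single word handles all prefixes below level n
  have block : ∀ (F : Set X), IsClosed F → interior F = ∅ → ∀ n : ℕ,
      ∃ m, n < m ∧ ∃ w : ∀ j, M j,
        ∀ p : ∀ j, M j, (∀ j, n ≤ j → j < m → p j = w j) → C (m - 1) p ∩ F = ∅ := by
    intro F hFclosed hFint n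
    set comb : (∀ j : Fin n, M j) → (∀ j, M j) → (∀ j, M j) :=
      fun a w j => if h : j < n then a ⟨j, h⟩ else w j with hcomb
    have key : ∀ l : List (∀ j : Fin n, M j), ∃ m, n ≤ m ∧ ∃ w : ∀ j, M j,
        ∀ a ∈ l, C m (comb a w) ∩ F = ∅ := by
      intro l
      induction l with
      | nil => exact ⟨n, le_rfl, fun j => Classical.arbitrary _, by simp⟩
      | cons a l ih =>
        obtain ⟨m, hm, w, hw⟩ := ih
        obtain ⟨m', hm', q, hq, hqF⟩ := ext F hFclosed hFint m (comb a w)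
        refine ⟨m', hm.trans hm'.le, fun j => if j ≤ m then w j else q j, ?_⟩
        intro b hb
        rcases List.mem_cons.mp hb with rfl | hb
        · rw [hdep m' (comb b (fun j => if j ≤ m then w j else q j)) q ?_]
          · exact hqF
          intro j hj
          by_cases h1 : j < n
          · simp only [hcomb, dif_pos h1]
            rw [hq j (by omega)]
            simp [hcomb, dif_pos h1]
          · simp only [hcomb, dif_neg h1]
            by_cases h2 : j ≤ m
            · rw [if_pos h2, hq j h2]
              simp [hcomb, dif_neg h1]
            · rw [if_neg h2]
        · apply Set.eq_empty_of_subset_empty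
          rw [← hw b hb]
          apply Set.inter_subset_inter_left
          have heq : C m (comb b (fun j => if j ≤ m then w j else q j)) = C m (comb b w) := by
            apply hdep
            intro j hj
            by_cases h1 : j < n
            · simp [hcomb, dif_pos h1]
            · simp only [hcomb, dif_neg h1]
              rw [if_pos hj]
          rw [← heq]
          exact Cmono _ hm'.le
    have : Finite (∀ j : Fin n, M j) := by infer_instance
    have := Fintype.ofFinite (∀ j : Fin n, M j)
    obtain ⟨m, hm, w, hw⟩ := key Finset.univ.toList
    refine ⟨m + 1, by omega, w, ?_⟩
    intro p hp
    have hsimp : m + 1 - 1 = m := by omega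
    rw [hsimp]
    have heq : C m p = C m (comb (fun j => p j) w) := by
      apply hdep
      intro j hj
      by_cases h1 : j < n
      · simp [hcomb, dif_pos h1]
      · simp only [hcomb, dif_neg h1]
        exact hp j (by omega) (by omega)
    rw [heq]
    exact hw (fun j => p j) (by simp)
  -- main recursion
  have hstep2 : ∀ (i : ℕ) (a : ℕ × (∀ j, M j)), ∃ a' : ℕ × (∀ j, M j),
      a.1 < a'.1 ∧ (∀ j < a.1, a'.2 j = a.2 j) ∧
      ∀ p : ∀ j, M j, (∀ j, a.1 ≤ j → j < a'.1 → p j = a'.2 j) →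
        C (a'.1 - 1) p ∩ G i = ∅ := by
    rintro i ⟨ni, ri⟩
    obtain ⟨m, hm, w, hw⟩ := block (G i) (hGc i) (hGi i) ni
    refine ⟨(m, fun j => if j < ni then ri j else w j), hm, fun j hj => if_pos hj, ?_⟩
    intro p hp
    apply hw p
    intro j h1 h2
    rw [hp j h1 h2]
    show (if j < ni then ri j else w j) = w j
    rw [if_neg (by omega)]
  choose next2 hn1 hn2 hn3 using hstep2
  set g : ℕ → ℕ × (∀ j, M j) :=
    fun i => Nat.rec (0, fun j => Classical.arbitrary (M j)) next2 i with hg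
  have hgsucc : ∀ i, g (i + 1) = next2 i (g i) := fun i => rfl
  set n : ℕ → ℕ := fun i => (g i).1 with hn
  have hmono : StrictMono n := strictMono_nat_of_lt_succ (fun i => hn1 i (g i))
  have hcons : ∀ i i', i ≤ i' → ∀ j < n i, (g i').2 j = (g i).2 j := by
    intro i i' h
    induction i', h using Nat.le_induction with
    | base => intro j _; rfl
    | succ m hm ih =>
      intro j hj
      rw [hgsucc, hn2 m (g m) j (lt_of_lt_of_le hj (hmono.le_iff_le.mpr hm)), ih j hj]
  set r : ∀ j, M j := fun j => (g (j + 1)).2 j with hr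
  have hrblock : ∀ i, ∀ j, n i ≤ j → j < n (i + 1) → r j = (g (i + 1)).2 j := by
    intro i j h1 h2
    have hin : i ≤ n i := hmono.le_apply
    exact hcons (i + 1) (j + 1) (by omega) j h2
  refine ⟨n, rfl, hmono, r, ?_⟩
  intro s hs x hx
  by_contra hxR
  obtain ⟨k, hk⟩ := Set.mem_iUnion.mp (hRG hxR)
  obtain ⟨i, hiS, hik⟩ := hs.exists_gt k
  have hagr : ∀ j, n i ≤ j → j < n (i + 1) → s j = (g (i + 1)).2 j := by
    intro j h1 h2
    rw [hiS j h1 h2]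
    exact hrblock i j h1 h2
  have hdisj : C (n (i + 1) - 1) s ∩ G i = ∅ := by
    have := hn3 i (g i) s
    rw [← hgsucc] at this
    exact this hagr
  have hxC : x ∈ C (n (i + 1) - 1) s := Set.mem_iInter.mp hx _
  have hxG : x ∈ G i := hGmono hik.le hk
  have : x ∈ C (n (i + 1) - 1) s ∩ G i := ⟨hxC, hxG⟩
  rw [hdisj] at this
  exact this
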